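/- arXiv:2604.20058 — 7 statements merged into one kernel-verified Lean document; each statement's English description precedes it below -/
import Mathlib

section
/- For any initial data U₀ ∈ ℝ³, every solution u = (u₁,u₂,u₃) of the Lorenz system u₁' = -σu₁ + σu₂, u₂' = -σu₁ - u₂ - u₁u₃, u₃' = -bu₃ + u₁u₂ - b(ρ+σ) satisfies, for all t ≥ 0, ‖u(t)‖² ≤ e^{-2αt}‖U₀‖² + b(ρ+σ)²/(2α), where α = min{σ, 1, b/2} and ‖·‖ is the Euclidean norm on ℝ³. -/
/-- absorbing-ball estimate for the shifted Lorenz 1963 system. -/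
theorem lorenz_absorbing_ball
    (σ b ρ : ℝ) (hσ : 0 < σ) (hb : 0 < b) (hρ : 0 < ρ)
    (u₁ u₂ u₃ : ℝ → ℝ) (U₁ U₂ U₃ : ℝ)
    (h₁ : ∀ t : ℝ, HasDerivAt u₁ (-σ * u₁ t + σ * u₂ t) t)
    (h₂ : ∀ t : ℝ, HasDerivAt u₂ (-σ * u₁ t - u₂ t - u₁ t * u₃ t) t)
    (h₃ : ∀ t : ℝ, HasDerivAt u₃ (-b * u₃ t + u₁ t * u₂ t - b * (ρ + σ)) t)
    (hU₁ : u₁ 0 = U₁) (hU₂ : u₂ 0 = U₂) (hU₃ : u₃ 0 = U₃) :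
    ∀ t : ℝ, 0 ≤ t →
      u₁ t ^ 2 + u₂ t ^ 2 + u₃ t ^ 2 ≤
        Real.exp (-2 * min σ (min 1 (b / 2)) * t) * (U₁ ^ 2 + U₂ ^ 2 + U₃ ^ 2)
          + b * (ρ + σ) ^ 2 / (2 * min σ (min 1 (b / 2))) := by
  set α := min σ (min 1 (b / 2)) with hαdef
  have hα0 : 0 < α := lt_min hσ (lt_min one_pos (by linarith))
  have hασ : α ≤ σ := min_le_left _ _
  have hα1 : α ≤ 1 := le_trans (min_le_right _ _) (min_le_left _ _)
  have hαb : α ≤ b / 2 := le_trans (min_le_right _ _) (min_le_right _ _)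
  set K := b * (ρ + σ) ^ 2 with hKdef
  set E : ℝ → ℝ := fun t => u₁ t ^ 2 + u₂ t ^ 2 + u₃ t ^ 2 with hEdef
  have hE' : ∀ t, HasDerivAt E
      (-2 * σ * u₁ t ^ 2 - 2 * u₂ t ^ 2 - 2 * b * u₃ t ^ 2 - 2 * b * (ρ + σ) * u₃ t) t := by
    intro t
    have h := (((h₁ t).pow 2).add ((h₂ t).pow 2)).add ((h₃ t).pow 2)
    refine h.congr_deriv ?_
    ring
  set F : ℝ → ℝ := fun t => Real.exp (2 * α * t) * (E t - K / (2 * α)) with hFdef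
  have hF' : ∀ t, HasDerivAt F
      (Real.exp (2 * α * t) *
        ((-2 * σ * u₁ t ^ 2 - 2 * u₂ t ^ 2 - 2 * b * u₃ t ^ 2 - 2 * b * (ρ + σ) * u₃ t)
          + 2 * α * (E t - K / (2 * α)))) t := by
    intro t
    have hexp : HasDerivAt (fun s => Real.exp (2 * α * s)) (2 * α * Real.exp (2 * α * t)) t := by
      simpa [mul_comm] using ((hasDerivAt_id t).const_mul (2 * α)).exp
    have h := hexp.mul ((hE' t).sub_const (K / (2 * α)))
    refine h.congr_deriv ?_
    ring
  have hder : ∀ t, deriv F t ≤ 0 := by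
    intro t
    rw [(hF' t).deriv]
    have hexp : (0:ℝ) ≤ Real.exp (2 * α * t) := (Real.exp_pos _).le
    have h2α : (2 * α) ≠ 0 := by positivity
    have key : (-2 * σ * u₁ t ^ 2 - 2 * u₂ t ^ 2 - 2 * b * u₃ t ^ 2 - 2 * b * (ρ + σ) * u₃ t)
        + 2 * α * (E t - K / (2 * α)) ≤ 0 := by
      have hc : 2 * α * (E t - K / (2 * α)) = 2 * α * E t - K := by
        field_simp
      rw [hc]
      simp only [hEdef, hKdef]
      nlinarith [sq_nonneg (u₃ t + (ρ + σ)), sq_nonneg (u₁ t), sq_nonneg (u₂ t),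
        sq_nonneg (u₃ t), hα0.le, hb.le]
    exact mul_nonpos_of_nonneg_of_nonpos hexp key
  have hanti : Antitone F :=
    antitone_of_deriv_nonpos (fun t => (hF' t).differentiableAt) hder
  intro t ht
  have hFt : F t ≤ F 0 := hanti ht
  have hF0 : F 0 = (U₁ ^ 2 + U₂ ^ 2 + U₃ ^ 2) - K / (2 * α) := by
    simp [hFdef, hEdef, hU₁, hU₂, hU₃]
  rw [hF0] at hFt
  have hcnn : 0 ≤ K / (2 * α) := by positivity
  have hprod : Real.exp (-2 * α * t) * Real.exp (2 * α * t) = 1 := by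
    rw [← Real.exp_add]; ring_nf; exact Real.exp_zero
  have hmul := mul_le_mul_of_nonneg_left hFt (Real.exp_pos (-2 * α * t)).le
  have hEt : E t = u₁ t ^ 2 + u₂ t ^ 2 + u₃ t ^ 2 := rfl
  rw [hFdef] at hmul
  simp only at hmul
  nlinarith [hmul, hprod, hcnn, Real.exp_pos (-2 * α * t), hEt]
end

section
/- Let δ̃ = u - ṽ be the error of the backward-nudged Lorenz system on [0,T] with terminal data δ̃(T), where u is a reference Lorenz solution with ‖u(t)‖ ≤ K. For any η > 0, if μ̃₁ ≥ σ + K²/2 + K²/(4η) and μ̃₂ ≥ 1 + K²/2, then ‖δ̃(0)‖² ≤ ‖δ̃(T)‖² e^{2(b+η)T}. -/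
lemma quad_key (σ b η μ₁ μ₂ K u₁ u₂ u₃ w₁ w₂ w₃ : ℝ)
    (hb : 0 < b) (hη : 0 < η)
    (hu : u₁^2 + u₂^2 + u₃^2 ≤ K^2)
    (h1 : K^2 ≤ (μ₁ - σ - K^2/2) * (4*η))
    (h2 : 1 + K^2/2 ≤ μ₂) :
    0 ≤ 2*(u₁-w₁)*(-σ*(u₁-w₁)+σ*(u₂-w₂)+μ₁*(u₁-w₁))
      + 2*(u₂-w₂)*(-σ*(u₁-w₁)-(u₂-w₂)-u₁*u₃+w₁*w₃+μ₂*(u₂-w₂))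
      + 2*(u₃-w₃)*(-b*(u₃-w₃)+u₁*u₂-w₁*w₂)
      + 2*(b+η)*((u₁-w₁)^2+(u₂-w₂)^2+(u₃-w₃)^2) := by
  nlinarith [sq_nonneg (u₂*(u₁-w₁) + 2*η*(u₃-w₃)),
    sq_nonneg (u₃*(u₁-w₁) - 2*η*(u₂-w₂)),
    mul_nonneg (sub_nonneg.2 h1) (sq_nonneg (u₁-w₁)),
    mul_nonneg (by nlinarith [sq_nonneg u₁] : (0:ℝ) ≤ K^2 - u₂^2 - u₃^2) (sq_nonneg (u₁-w₁)),
    mul_nonneg (mul_nonneg hη.le (sq_nonneg K)) (sq_nonneg (u₁-w₁)),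
    mul_nonneg (mul_nonneg hη.le (sq_nonneg K)) (sq_nonneg (u₂-w₂)),
    mul_nonneg (mul_nonneg hη.le (by linarith : (0:ℝ) ≤ μ₂ - 1 - K^2/2)) (sq_nonneg (u₂-w₂)),
    mul_nonneg (mul_nonneg hη.le hb.le) (sq_nonneg (u₁-w₁)),
    mul_nonneg (mul_nonneg hη.le hb.le) (sq_nonneg (u₂-w₂)),
    mul_nonneg (mul_nonneg hη.le hη.le) (sq_nonneg (u₁-w₁)),
    hη, hb]

/-- backward growth estimate for the backward-nudged Lorenz error
system `δ̃ = u - ṽ`. -/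
theorem lorenz_backward_nudging_growth
    (σ b ρ : ℝ) (hσ : 0 < σ) (hb : 0 < b) (hρ : 0 < ρ)
    (μ₁' μ₂' : ℝ) (hμ₁0 : 0 ≤ μ₁') (hμ₂0 : 0 ≤ μ₂')
    (T K η : ℝ) (hT : 0 ≤ T) (hK : 0 ≤ K) (hη : 0 < η)
    (u₁ u₂ u₃ w₁ w₂ w₃ : ℝ → ℝ)
    -- error equations in (forward) time t for δ̃ = u - ṽ, where ṽ = (w₁,w₂,w₃)
    -- solves the backward-nudged system with terminal condition at t = T
    (hd₁ : ∀ t ∈ Set.Icc (0 : ℝ) T,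
      HasDerivAt (fun s => u₁ s - w₁ s)
        (-σ * (u₁ t - w₁ t) + σ * (u₂ t - w₂ t) + μ₁' * (u₁ t - w₁ t)) t)
    (hd₂ : ∀ t ∈ Set.Icc (0 : ℝ) T,
      HasDerivAt (fun s => u₂ s - w₂ s)
        (-σ * (u₁ t - w₁ t) - (u₂ t - w₂ t) - u₁ t * u₃ t + w₁ t * w₃ t
          + μ₂' * (u₂ t - w₂ t)) t)
    (hd₃ : ∀ t ∈ Set.Icc (0 : ℝ) T,
      HasDerivAt (fun s => u₃ s - w₃ s)
        (-b * (u₃ t - w₃ t) + u₁ t * u₂ t - w₁ t * w₂ t) t)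
    -- uniform bound on the reference solution
    (hu : ∀ t ∈ Set.Icc (0 : ℝ) T, u₁ t ^ 2 + u₂ t ^ 2 + u₃ t ^ 2 ≤ K ^ 2)
    (hμ₁ : μ₁' ≥ σ + K ^ 2 / 2 + K ^ 2 / (4 * η))
    (hμ₂ : μ₂' ≥ 1 + K ^ 2 / 2) :
    (u₁ 0 - w₁ 0) ^ 2 + (u₂ 0 - w₂ 0) ^ 2 + (u₃ 0 - w₃ 0) ^ 2 ≤
      ((u₁ T - w₁ T) ^ 2 + (u₂ T - w₂ T) ^ 2 + (u₃ T - w₃ T) ^ 2) *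
        Real.exp (2 * (b + η) * T) := by
  set c : ℝ := 2 * (b + η) with hc
  -- the energy times exponential weight
  set F : ℝ → ℝ := fun s =>
    ((u₁ s - w₁ s) ^ 2 + (u₂ s - w₂ s) ^ 2 + (u₃ s - w₃ s) ^ 2) * Real.exp (c * s)
    with hF
  -- derivative of F at points of [0, T]
  have hFd : ∀ t ∈ Set.Icc (0 : ℝ) T,
      HasDerivAt F
        (((2 * (u₁ t - w₁ t) ^ 1 *
            (-σ * (u₁ t - w₁ t) + σ * (u₂ t - w₂ t) + μ₁' * (u₁ t - w₁ t))
          + 2 * (u₂ t - w₂ t) ^ 1 *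
            (-σ * (u₁ t - w₁ t) - (u₂ t - w₂ t) - u₁ t * u₃ t + w₁ t * w₃ t
              + μ₂' * (u₂ t - w₂ t))
          + 2 * (u₃ t - w₃ t) ^ 1 *
            (-b * (u₃ t - w₃ t) + u₁ t * u₂ t - w₁ t * w₂ t)) * Real.exp (c * t)
          + ((u₁ t - w₁ t) ^ 2 + (u₂ t - w₂ t) ^ 2 + (u₃ t - w₃ t) ^ 2) *
            (Real.exp (c * t) * c))) t := by
    intro t ht
    have hE : HasDerivAt
        (fun s => (u₁ s - w₁ s) ^ 2 + (u₂ s - w₂ s) ^ 2 + (u₃ s - w₃ s) ^ 2)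
        (2 * (u₁ t - w₁ t) ^ 1 *
            (-σ * (u₁ t - w₁ t) + σ * (u₂ t - w₂ t) + μ₁' * (u₁ t - w₁ t))
          + 2 * (u₂ t - w₂ t) ^ 1 *
            (-σ * (u₁ t - w₁ t) - (u₂ t - w₂ t) - u₁ t * u₃ t + w₁ t * w₃ t
              + μ₂' * (u₂ t - w₂ t))
          + 2 * (u₃ t - w₃ t) ^ 1 *
            (-b * (u₃ t - w₃ t) + u₁ t * u₂ t - w₁ t * w₂ t)) t :=
      (((hd₁ t ht).pow 2).add ((hd₂ t ht).pow 2)).add ((hd₃ t ht).pow 2)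
    have hexp : HasDerivAt (fun s => Real.exp (c * s)) (Real.exp (c * t) * c) t := by
      have h0 : HasDerivAt (fun s : ℝ => c * s) c t := by
        simpa using (hasDerivAt_id t).const_mul c
      exact h0.exp
    exact hE.mul hexp
  -- the derivative is nonnegative on [0, T]
  have hμ₁4 : K ^ 2 ≤ (μ₁' - σ - K ^ 2 / 2) * (4 * η) := by
    have h4η : (0 : ℝ) < 4 * η := by linarith
    have : K ^ 2 / (4 * η) ≤ μ₁' - σ - K ^ 2 / 2 := by linarith
    calc K ^ 2 = K ^ 2 / (4 * η) * (4 * η) := by field_simp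
    _ ≤ (μ₁' - σ - K ^ 2 / 2) * (4 * η) := by
        exact mul_le_mul_of_nonneg_right this h4η.le
  have hmono : MonotoneOn F (Set.Icc (0 : ℝ) T) := by
    apply monotoneOn_of_deriv_nonneg (convex_Icc 0 T)
    · exact fun t ht => (hFd t ht).continuousAt.continuousWithinAt
    · intro t ht
      rw [interior_Icc] at ht
      exact ((hFd t (Set.mem_Icc_of_Ioo ht)).differentiableAt).differentiableWithinAt
    · intro t ht
      rw [interior_Icc] at ht
      have ht' : t ∈ Set.Icc (0 : ℝ) T := Set.mem_Icc_of_Ioo ht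
      rw [(hFd t ht').deriv]
      have hexp_pos : (0 : ℝ) < Real.exp (c * t) := Real.exp_pos _
      have hq := quad_key σ b η μ₁' μ₂' K (u₁ t) (u₂ t) (u₃ t) (w₁ t) (w₂ t) (w₃ t)
        hb hη (hu t ht') hμ₁4 hμ₂
      have : 0 ≤ (2 * (u₁ t - w₁ t) ^ 1 *
            (-σ * (u₁ t - w₁ t) + σ * (u₂ t - w₂ t) + μ₁' * (u₁ t - w₁ t))
          + 2 * (u₂ t - w₂ t) ^ 1 *
            (-σ * (u₁ t - w₁ t) - (u₂ t - w₂ t) - u₁ t * u₃ t + w₁ t * w₃ t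
              + μ₂' * (u₂ t - w₂ t))
          + 2 * (u₃ t - w₃ t) ^ 1 *
            (-b * (u₃ t - w₃ t) + u₁ t * u₂ t - w₁ t * w₂ t))
          + ((u₁ t - w₁ t) ^ 2 + (u₂ t - w₂ t) ^ 2 + (u₃ t - w₃ t) ^ 2) * c := by
        rw [hc]; nlinarith [hq]
      nlinarith [mul_le_mul_of_nonneg_right this hexp_pos.le]
  have h0T : F 0 ≤ F T :=
    hmono (Set.mem_Icc.2 ⟨le_refl 0, hT⟩) (Set.mem_Icc.2 ⟨hT, le_refl T⟩) hT
  have hF0 : F 0 = (u₁ 0 - w₁ 0) ^ 2 + (u₂ 0 - w₂ 0) ^ 2 + (u₃ 0 - w₃ 0) ^ 2 := by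
    simp [hF]
  have hFT : F T = ((u₁ T - w₁ T) ^ 2 + (u₂ T - w₂ T) ^ 2 + (u₃ T - w₃ T) ^ 2) *
      Real.exp (2 * (b + η) * T) := by
    simp [hF, hc]
  rw [hF0, hFT] at h0T
  exact h0T
end

section
/- For the 1D heat equation on the torus with forcing f, consider the BFN iteration observing the first M Fourier modes with forward gain μ > 0 and backward gain μ̃ > 0. If the error w = u - v has Fourier coefficients ŵ(k,t), then after one complete forward-backward cycle, ŵ(k,0) is multiplied by e^{-(μ+μ̃)T} if |k| ≤ M and is unchanged if |k| > M. -/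
open Complex

lemma ode_exp_sol (c : ℂ) (f : ℝ → ℂ)
    (hf : ∀ t : ℝ, HasDerivAt f (c * f t) t) (s t : ℝ) :
    f t = Complex.exp (c * (t - s)) * f s := by
  have key : ∀ u : ℝ, Complex.exp (-c * u) * f u = Complex.exp (-c * s) * f s := by
    intro u
    set g : ℝ → ℂ := fun x : ℝ => Complex.exp (-c * x) * f x with hg
    have hgd : ∀ x : ℝ, HasDerivAt g 0 x := by
      intro x
      have h1 : HasDerivAt (fun x : ℝ => Complex.exp (-c * x)) (Complex.exp (-c * x) * (-c)) x := by
        have hx : HasDerivAt (fun x : ℝ => -c * (x : ℂ)) (-c) x := by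
          simpa using ((hasDerivAt_id x).ofReal_comp.const_mul (-c))
        simpa [mul_comm] using hx.cexp
      have h2 := h1.mul (hf x)
      convert h2 using 1
      case e'_4 => rfl
      case e'_8 => rfl
      case e'_9 => ring
    have hc : ∀ x y : ℝ, g x = g y := by
      intro x y
      exact is_const_of_deriv_eq_zero (fun x => (hgd x).differentiableAt)
        (fun x => (hgd x).deriv) x y
    exact hc u s
  have hk := key t
  calc f t = Complex.exp (c * t) * (Complex.exp (-c * t) * f t) := by
        rw [← mul_assoc, ← Complex.exp_add]; simp
    _ = Complex.exp (c * t) * (Complex.exp (-c * s) * f s) := by rw [hk]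
    _ = Complex.exp (c * (t - s)) * f s := by
        rw [← mul_assoc, ← Complex.exp_add]; ring_nf

/-- for the 1D periodic heat equation BFN iteration observing the
first `M` Fourier modes, after one complete forward-backward cycle the Fourier
coefficient `ŵ(k,0)` of the error is multiplied by `e^{-(μ+μ̃)T}` when
`|k| ≤ M` and is unchanged when `|k| > M`. -/
theorem heat_BFN_one_cycle_fourier
    (ν L T μ μ' : ℝ) (hν : 0 < ν) (hL : 0 < L) (hT : 0 < T)
    (hμ : 0 < μ) (hμ' : 0 < μ')
    (M : ℕ)
    (w w' : ℤ → ℝ → ℂ)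
    -- forward error modes: ŵ' = (-ν(2πk/L)² - μ χ_{|k|≤M}) ŵ
    (hfwd : ∀ k : ℤ, ∀ t : ℝ,
      HasDerivAt (w k)
        ((((-ν * (2 * Real.pi * (k : ℝ) / L) ^ 2
            - μ * (if |k| ≤ (M : ℤ) then (1 : ℝ) else 0)) : ℝ) : ℂ) * w k t) t)
    -- backward error modes: ŵ̃(t) = e^{(ν(2πk/L)² - μ̃ χ)(T-t)} ŵ̃(T), i.e.
    -- d/dt ŵ̃ = -(ν(2πk/L)² - μ̃ χ) ŵ̃
    (hbwd : ∀ k : ℤ, ∀ t : ℝ,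
      HasDerivAt (w' k)
        (((-(ν * (2 * Real.pi * (k : ℝ) / L) ^ 2
            - μ' * (if |k| ≤ (M : ℤ) then (1 : ℝ) else 0)) : ℝ) : ℂ) * w' k t) t)
    -- interface condition at time T
    (hglue : ∀ k : ℤ, w' k T = w k T) :
    ∀ k : ℤ,
      w' k 0 = (if |k| ≤ (M : ℤ)
        then (Real.exp (-(μ + μ') * T) : ℂ) else 1) * w k 0 := by
  intro k
  set χ : ℝ := if |k| ≤ (M : ℤ) then (1 : ℝ) else 0 with hχ
  set a : ℂ := ((-ν * (2 * Real.pi * (k : ℝ) / L) ^ 2 - μ * χ : ℝ) : ℂ) with ha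
  set b : ℂ := ((-(ν * (2 * Real.pi * (k : ℝ) / L) ^ 2 - μ' * χ) : ℝ) : ℂ) with hb
  have h1 : w k T = Complex.exp (a * (T - 0)) * w k 0 := ode_exp_sol a (w k) (hfwd k) 0 T
  have h2 : w' k 0 = Complex.exp (b * (0 - T)) * w' k T := ode_exp_sol b (w' k) (hbwd k) T 0
  rw [h2, hglue k, h1, ← mul_assoc, ← Complex.exp_add]
  have hab : b * (0 - T) + a * (T - 0) = ((-(μ + μ') * χ * T : ℝ) : ℂ) := by
    simp only [ha, hb]
    push_cast
    ring
  rw [hab]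
  by_cases hk : |k| ≤ (M : ℤ)
  · simp only [hχ, hk, if_true, mul_one]
    rw [← Complex.ofReal_exp]
  · simp only [hχ, hk, if_false, mul_zero, zero_mul, Complex.ofReal_zero, Complex.exp_zero]
end

section
/- Let u₀ be a trigonometric polynomial of degree K and let u(t) solve the heat equation u_t = ν u_{xx} + f on the torus. Let (vⁿ, ṽⁿ) be the BFN iterates observing modes |k| ≤ M, initialized with a trigonometric polynomial v₀ of degree K. Then limₙ→∞ ‖vⁿ(0) - u₀‖_{L²} = ‖Q_M(v₀ - u₀)‖_{L²}, where Q_M = I - P_M; i.e., the error in unobserved modes is invariant across all BFN iterations while the observed error tends to zero. -/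
open Filter Complex

private theorem lin_ode' (c : ℂ) (y : ℝ → ℂ) (hy : ∀ t, HasDerivAt y (c * y t) t) (t : ℝ) :
    y t = Complex.exp (c * t) * y 0 := by
  have hg : ∀ u : ℝ, HasDerivAt (fun u : ℝ => Complex.exp (-(c * u)) * y u) 0 u := by
    intro u
    have h0 : HasDerivAt (fun u : ℝ => -(c * (u : ℂ))) (-c) u := by
      refine (((Complex.ofRealCLM.hasDerivAt (x := u)).const_mul c).neg).congr_deriv ?_
      simp
    have h1 : HasDerivAt (fun u : ℝ => Complex.exp (-(c * u)))
        (Complex.exp (-(c * u)) * (-c)) u := h0.cexp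
    have := h1.mul (hy u)
    refine this.congr_deriv ?_
    ring
  have key : Complex.exp (-(c * t)) * y t = Complex.exp (-(c * 0)) * y 0 :=
    is_const_of_deriv_eq_zero (fun u => (hg u).differentiableAt)
      (fun u => (hg u).deriv) t 0
  have h2 : Complex.exp (c * t) * (Complex.exp (-(c * t)) * y t)
      = Complex.exp (c * t) * (Complex.exp (-(c * 0)) * y 0) := by rw [key]
  have h3 : Complex.exp (c * t) * Complex.exp (-(c * t)) = 1 := by
    rw [← Complex.exp_add]; simp
  rw [← mul_assoc, h3, one_mul] at h2
  simpa using h2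

/-- for the 1D periodic heat equation with trigonometric-polynomial
data (of degree `K`), written mode-by-mode in Fourier space, the BFN iterates
`vⁿ` satisfy `‖vⁿ(0) - u₀‖ → ‖Q_M(v₀ - u₀)‖`: the observed error tends to zero
while the error in the unobserved modes is invariant. Here `a k t`, `v n k t`,
`w n k t` denote the Fourier coefficients of `u(t)`, `vⁿ(t)`, `ṽⁿ(t)`, and
`fhat` gives the coefficients of the forcing `f`. -/
theorem heat_BFN_iterates_limit
    (ν L T μ μ' : ℝ) (hν : 0 < ν) (hL : 0 < L) (hT : 0 < T)
    (hμ : 0 < μ) (hμ' : 0 < μ')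
    (M K : ℕ) (fhat : ℤ → ℂ)
    (a : ℤ → ℝ → ℂ) (v w : ℕ → ℤ → ℝ → ℂ)
    -- the reference solution modes: â' = -ν(2πk/L)² â + f̂
    (ha : ∀ k : ℤ, ∀ t : ℝ,
      HasDerivAt (a k)
        (((-ν * (2 * Real.pi * (k : ℝ) / L) ^ 2 : ℝ) : ℂ) * a k t + fhat k) t)
    -- u₀ is a trigonometric polynomial of degree K
    (haK : ∀ k : ℤ, (K : ℤ) < |k| → a k 0 = 0)
    -- so is the initialization v₀ = v 0 (·) 0
    (hvK : ∀ k : ℤ, (K : ℤ) < |k| → v 0 k 0 = 0)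
    -- forward nudged iterates: v̂' = -ν(2πk/L)² v̂ + μ χ_{|k|≤M}(â - v̂) + f̂
    (hv : ∀ n : ℕ, ∀ k : ℤ, ∀ t : ℝ,
      HasDerivAt (v n k)
        (((-ν * (2 * Real.pi * (k : ℝ) / L) ^ 2 : ℝ) : ℂ) * v n k t
          + ((μ * (if |k| ≤ (M : ℤ) then (1 : ℝ) else 0) : ℝ) : ℂ)
              * (a k t - v n k t) + fhat k) t)
    -- backward nudged iterates: ŵ' = -ν(2πk/L)² ŵ - μ̃ χ_{|k|≤M}(â - ŵ) + f̂
    (hw : ∀ n : ℕ, ∀ k : ℤ, ∀ t : ℝ,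
      HasDerivAt (w n k)
        (((-ν * (2 * Real.pi * (k : ℝ) / L) ^ 2 : ℝ) : ℂ) * w n k t
          - ((μ' * (if |k| ≤ (M : ℤ) then (1 : ℝ) else 0) : ℝ) : ℂ)
              * (a k t - w n k t) + fhat k) t)
    -- BFN gluing: ṽⁿ(T) = vⁿ(T) and vⁿ⁺¹(0) = ṽⁿ(0)
    (hglue₁ : ∀ n : ℕ, ∀ k : ℤ, w n k T = v n k T)
    (hglue₂ : ∀ n : ℕ, ∀ k : ℤ, v (n + 1) k 0 = w n k 0) :
    Tendsto
      (fun n : ℕ => Real.sqrt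
        (∑ k ∈ Finset.Icc (-(K : ℤ)) (K : ℤ), ‖v n k 0 - a k 0‖ ^ 2))
      atTop
      (nhds (Real.sqrt
        (∑ k ∈ (Finset.Icc (-(K : ℤ)) (K : ℤ)).filter (fun k => (M : ℤ) < |k|),
          ‖v 0 k 0 - a k 0‖ ^ 2))) := by
  set ind : ℤ → ℝ := fun k => if |k| ≤ (M : ℤ) then (1 : ℝ) else 0 with hind
  set lam : ℤ → ℂ := fun k => ((-ν * (2 * Real.pi * (k : ℝ) / L) ^ 2 : ℝ) : ℂ) with hlam
  -- forward error ODE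
  have hd : ∀ n k t, HasDerivAt (fun t => v n k t - a k t)
      ((lam k - ((μ * ind k : ℝ) : ℂ)) * (v n k t - a k t)) t := by
    intro n k t
    have := (hv n k t).sub (ha k t)
    refine this.congr_deriv ?_
    ring
  have he : ∀ n k t, HasDerivAt (fun t => w n k t - a k t)
      ((lam k + ((μ' * ind k : ℝ) : ℂ)) * (w n k t - a k t)) t := by
    intro n k t
    have := (hw n k t).sub (ha k t)
    refine this.congr_deriv ?_
    ring
  have hdT : ∀ n k, v n k T - a k T
      = Complex.exp ((lam k - ((μ * ind k : ℝ) : ℂ)) * T) * (v n k 0 - a k 0) :=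
    fun n k => lin_ode' _ _ (hd n k) T
  have heT : ∀ n k, w n k T - a k T
      = Complex.exp ((lam k + ((μ' * ind k : ℝ) : ℂ)) * T) * (w n k 0 - a k 0) :=
    fun n k => lin_ode' _ _ (he n k) T
  set ρ : ℤ → ℂ := fun k =>
    Complex.exp (-(((μ * ind k : ℝ) : ℂ) + ((μ' * ind k : ℝ) : ℂ)) * T) with hρ
  have hrec : ∀ n k, v (n + 1) k 0 - a k 0 = ρ k * (v n k 0 - a k 0) := by
    intro n k
    have h1 := heT n k
    rw [hglue₁ n k, hdT n k] at h1
    -- solve for w n k 0 - a k 0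
    have h2 : w n k 0 - a k 0
        = Complex.exp (-(lam k + ((μ' * ind k : ℝ) : ℂ)) * T)
          * (Complex.exp ((lam k - ((μ * ind k : ℝ) : ℂ)) * T) * (v n k 0 - a k 0)) := by
      rw [h1, ← mul_assoc, ← Complex.exp_add]
      have : -(lam k + ((μ' * ind k : ℝ) : ℂ)) * T
          + (lam k + ((μ' * ind k : ℝ) : ℂ)) * T = 0 := by ring
      rw [this, Complex.exp_zero, one_mul]
    rw [hglue₂ n k, h2, ← mul_assoc, ← Complex.exp_add, hρ]
    ring_nf
  have hpow : ∀ n k, v n k 0 - a k 0 = ρ k ^ n * (v 0 k 0 - a k 0) := by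
    intro n k
    induction n with
    | zero => simp
    | succ m ih => rw [hrec m k, ih, pow_succ]; ring
  have hterm : ∀ k, Tendsto (fun n : ℕ => ‖v n k 0 - a k 0‖ ^ 2) atTop
      (nhds (if (M : ℤ) < |k| then ‖v 0 k 0 - a k 0‖ ^ 2 else 0)) := by
    intro k
    by_cases hk : (M : ℤ) < |k|
    · have hik : ind k = 0 := by simp [hind, not_le.mpr hk]
      have hρ1 : ρ k = 1 := by simp [hρ, hik]
      have : ∀ n, ‖v n k 0 - a k 0‖ ^ 2
          = ‖v 0 k 0 - a k 0‖ ^ 2 := by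
        intro n; rw [hpow n k, hρ1]; simp
      simp only [this, if_pos hk]
      exact tendsto_const_nhds
    · have hik : ind k = 1 := by simp [hind, not_lt.mp hk]
      set r : ℝ := Real.exp (-(μ + μ') * T) with hr
      have hρval : ρ k = Complex.exp (((-(μ + μ') * T : ℝ) : ℂ)) := by
        rw [hρ]
        simp only [hik]
        push_cast
        ring_nf
      have habs : ‖ρ k‖ = r := by
        rw [hρval, Complex.norm_exp, Complex.ofReal_re]
      have hr0 : 0 ≤ r := Real.exp_nonneg _
      have hr1 : r < 1 := by
        apply Real.exp_lt_one_iff.mpr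
        nlinarith
      have hlim : Tendsto (fun n : ℕ => r ^ n) atTop (nhds 0) :=
        tendsto_pow_atTop_nhds_zero_of_lt_one hr0 hr1
      have heq : ∀ n, ‖v n k 0 - a k 0‖ ^ 2
          = (r ^ n * ‖v 0 k 0 - a k 0‖) ^ 2 := by
        intro n
        rw [hpow n k, norm_mul, norm_pow, habs]
      simp only [heq, if_neg hk]
      have := (hlim.mul_const (‖v 0 k 0 - a k 0‖)).pow 2
      simpa using this
  have hsum := tendsto_finset_sum (Finset.Icc (-(K : ℤ)) (K : ℤ))
    (fun k _ => hterm k)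
  rw [Finset.sum_filter]
  exact hsum.sqrt
end

section
/- For the periodic viscous linear transport equation u_t = ν u_{xx} - a u_x with a > 0, ν ≥ 0, the Fourier coefficient of the forward-nudged error satisfies ŵ(k,t) = e^{(-νk² - μχ_M(k) - iak)t} ŵ(k,0), and the backward-nudged error satisfies ŵ̃(k,t) = e^{(νk² - μ̃χ_M(k) + iak)(T-t)} ŵ̃(k,T). Consequently, for unobserved modes |k| > M, |ŵ̃(k,0)| = |ŵ(k,0)| after one complete BFN cycle. -/
open Complex

lemma solve_linear_ode (c : ℂ) (f : ℝ → ℂ)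
    (hf : ∀ t : ℝ, HasDerivAt f (c * f t) t) (t : ℝ) :
    f t = Complex.exp (c * t) * f 0 := by
  have hconst : ∀ s : ℝ, Complex.exp (-c * s) * f s = f 0 := by
    have hdiff : ∀ s : ℝ, HasDerivAt (fun s : ℝ => Complex.exp (-c * s) * f s) 0 s := by
      intro s
      have h0 : HasDerivAt (fun s : ℝ => -c * (s : ℂ)) (-c) s := by
        simpa using (Complex.ofRealCLM.hasDerivAt (x := s)).const_mul (-c)
      have h1 := h0.cexp
      have h2 := h1.mul (hf s)
      exact h2.congr_deriv (by ring)
    have : ∀ s : ℝ, Complex.exp (-c * s) * f s = Complex.exp (-c * (0:ℝ)) * f 0 := by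
      intro s
      exact is_const_of_deriv_eq_zero
        (fun x => (hdiff x).differentiableAt)
        (fun x => (hdiff x).deriv) s 0
    intro s
    simpa using this s
  have := hconst t
  calc f t = Complex.exp (c * t) * (Complex.exp (-c * t) * f t) := by
        rw [← mul_assoc, ← Complex.exp_add]; ring_nf; simp
    _ = Complex.exp (c * t) * f 0 := by rw [this]

/-- explicit Fourier-mode solution formulas for the nudged
forward/backward viscous linear transport errors, and invariance of the
modulus of unobserved modes (`|k| > M`) over one complete BFN cycle. Domain is
`2π`-periodic, so mode `k` has wavenumber `k`. -/
theorem transport_BFN_fourier_modes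
    (ν a μ μ' T : ℝ) (hν : 0 ≤ ν) (ha : 0 < a) (hμ : 0 < μ) (hμ' : 0 < μ')
    (hT : 0 < T)
    (M : ℕ) (k : ℤ)
    (w w' : ℝ → ℂ)
    -- forward error mode: ŵ' = (-νk² - μχ_M(k) - i a k) ŵ
    (hfwd : ∀ t : ℝ,
      HasDerivAt w
        (((((-ν * (k : ℝ) ^ 2 - μ * (if |k| ≤ (M : ℤ) then (1:ℝ) else 0)) : ℝ) : ℂ)
          - Complex.I * (a : ℂ) * (k : ℂ)) * w t) t)
    -- backward error mode: ŵ̃(t) = e^{(νk² - μ̃χ + iak)(T-t)} ŵ̃(T), i.e.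
    -- d/dt ŵ̃ = -(νk² - μ̃χ_M(k) + i a k) ŵ̃
    (hbwd : ∀ t : ℝ,
      HasDerivAt w'
        (-(((((ν * (k : ℝ) ^ 2 - μ' * (if |k| ≤ (M : ℤ) then (1:ℝ) else 0)) : ℝ) : ℂ)
          + Complex.I * (a : ℂ) * (k : ℂ))) * w' t) t)
    (hglue : w' T = w T) :
    (∀ t : ℝ, w t =
      Complex.exp (((((-ν * (k : ℝ) ^ 2
          - μ * (if |k| ≤ (M : ℤ) then (1:ℝ) else 0)) : ℝ) : ℂ)
        - Complex.I * (a : ℂ) * (k : ℂ)) * (t : ℂ)) * w 0) ∧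
    (∀ t : ℝ, w' t =
      Complex.exp (((((ν * (k : ℝ) ^ 2
          - μ' * (if |k| ≤ (M : ℤ) then (1:ℝ) else 0)) : ℝ) : ℂ)
        + Complex.I * (a : ℂ) * (k : ℂ)) * ((T - t : ℝ) : ℂ)) * w' T) ∧
    ((M : ℤ) < |k| → ‖w' 0‖ = ‖w 0‖) := by
  set χ : ℝ := if |k| ≤ (M : ℤ) then (1:ℝ) else 0 with hχ
  set c : ℂ := ((((-ν * (k : ℝ) ^ 2 - μ * χ) : ℝ) : ℂ) - Complex.I * (a : ℂ) * (k : ℂ)) with hc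
  set B : ℂ := ((((ν * (k : ℝ) ^ 2 - μ' * χ) : ℝ) : ℂ) + Complex.I * (a : ℂ) * (k : ℂ)) with hB
  have hwsol : ∀ t : ℝ, w t = Complex.exp (c * t) * w 0 :=
    solve_linear_ode c w hfwd
  have hw'sol : ∀ t : ℝ, w' t = Complex.exp (-B * t) * w' 0 :=
    solve_linear_ode (-B) w' hbwd
  have hbwdform : ∀ t : ℝ, w' t = Complex.exp (B * ((T - t : ℝ) : ℂ)) * w' T := by
    intro t
    rw [hw'sol t, hw'sol T, ← mul_assoc, ← Complex.exp_add]
    congr 2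
    push_cast
    ring
  refine ⟨hwsol, hbwdform, ?_⟩
  intro hk
  have hχ0 : χ = 0 := by
    rw [hχ, if_neg (not_le.mpr hk)]
  have h1 : w' 0 = Complex.exp (B * T) * w T := by
    have := hbwdform 0
    rw [hglue] at this
    simpa using this
  have h2 : w T = Complex.exp (c * T) * w 0 := hwsol T
  have hBc : B + c = 0 := by
    rw [hB, hc, hχ0]
    push_cast
    ring
  have : w' 0 = w 0 := by
    rw [h1, h2, ← mul_assoc, ← Complex.exp_add]
    have : B * T + c * T = 0 := by
      rw [← add_mul, hBc, zero_mul]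
    rw [this, Complex.exp_zero, one_mul]
  rw [this]
end

section
/- Let v solve the forward-nudged Lorenz system v₁' = -σv₁ + σv₂ + μ₁(u₁ - v₁), v₂' = -σv₁ - v₂ - v₁v₃ + μ₂(u₂ - v₂), v₃' = -bv₃ + v₁v₂ - b(ρ+σ) on [0,T], where the observations satisfy ‖u(t)‖ ≤ K. Then ‖v(t)‖² ≤ e^{-ct}‖v(0)‖² + (b(ρ+σ)² + (μ₁+μ₂)K²)/c for all t ∈ [0,T], where c = min{2σ+μ₁, 2+μ₂, b}. -/
/-- energy bound for the forward-nudged Lorenz system. -/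
theorem lorenz_forward_nudged_energy_bound
    (σ b ρ : ℝ) (hσ : 0 < σ) (hb : 0 < b) (hρ : 0 < ρ)
    (μ₁ μ₂ : ℝ) (hμ₁ : 0 ≤ μ₁) (hμ₂ : 0 ≤ μ₂)
    (T K : ℝ) (hT : 0 ≤ T) (hK : 0 ≤ K)
    (u₁ u₂ u₃ v₁ v₂ v₃ : ℝ → ℝ)
    (hu_cont : Continuous u₁ ∧ Continuous u₂ ∧ Continuous u₃)
    (hu : ∀ t ∈ Set.Icc (0 : ℝ) T, u₁ t ^ 2 + u₂ t ^ 2 + u₃ t ^ 2 ≤ K ^ 2)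
    (hv₁ : ∀ t ∈ Set.Icc (0 : ℝ) T,
      HasDerivAt v₁ (-σ * v₁ t + σ * v₂ t + μ₁ * (u₁ t - v₁ t)) t)
    (hv₂ : ∀ t ∈ Set.Icc (0 : ℝ) T,
      HasDerivAt v₂ (-σ * v₁ t - v₂ t - v₁ t * v₃ t + μ₂ * (u₂ t - v₂ t)) t)
    (hv₃ : ∀ t ∈ Set.Icc (0 : ℝ) T,
      HasDerivAt v₃ (-b * v₃ t + v₁ t * v₂ t - b * (ρ + σ)) t) :
    ∀ t ∈ Set.Icc (0 : ℝ) T,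
      v₁ t ^ 2 + v₂ t ^ 2 + v₃ t ^ 2 ≤
        Real.exp (-(min (2 * σ + μ₁) (min (2 + μ₂) b)) * t) *
            (v₁ 0 ^ 2 + v₂ 0 ^ 2 + v₃ 0 ^ 2)
          + (b * (ρ + σ) ^ 2 + (μ₁ + μ₂) * K ^ 2)
              / min (2 * σ + μ₁) (min (2 + μ₂) b) := by
  set c : ℝ := min (2 * σ + μ₁) (min (2 + μ₂) b) with hc
  set M : ℝ := b * (ρ + σ) ^ 2 + (μ₁ + μ₂) * K ^ 2 with hM
  have hc_pos : 0 < c := by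
    apply lt_min (by linarith) (lt_min (by linarith) hb)
  have hc1 : c ≤ 2 * σ + μ₁ := min_le_left _ _
  have hc2 : c ≤ 2 + μ₂ := (min_le_right _ _).trans (min_le_left _ _)
  have hc3 : c ≤ b := (min_le_right _ _).trans (min_le_right _ _)
  have hM_nonneg : 0 ≤ M := by positivity
  set E : ℝ → ℝ := fun t => v₁ t ^ 2 + v₂ t ^ 2 + v₃ t ^ 2 with hE
  set D : ℝ → ℝ := fun t =>
      2 * v₁ t * (-σ * v₁ t + σ * v₂ t + μ₁ * (u₁ t - v₁ t)) +
      2 * v₂ t * (-σ * v₁ t - v₂ t - v₁ t * v₃ t + μ₂ * (u₂ t - v₂ t)) +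
      2 * v₃ t * (-b * v₃ t + v₁ t * v₂ t - b * (ρ + σ)) with hD
  have hE' : ∀ t ∈ Set.Icc (0 : ℝ) T, HasDerivAt E (D t) t := by
    intro t ht
    have h1 := ((hv₁ t ht).pow 2)
    have h2 := ((hv₂ t ht).pow 2)
    have h3 := ((hv₃ t ht).pow 2)
    have := (h1.add h2).add h3
    exact this.congr_deriv (by simp only [hD]; push_cast; ring)
  have key : ∀ t ∈ Set.Icc (0 : ℝ) T, D t ≤ -c * E t + M := by
    intro t ht
    have hu1 : u₁ t ^ 2 ≤ K ^ 2 := by nlinarith [hu t ht, sq_nonneg (u₂ t), sq_nonneg (u₃ t)]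
    have hu2 : u₂ t ^ 2 ≤ K ^ 2 := by nlinarith [hu t ht, sq_nonneg (u₁ t), sq_nonneg (u₃ t)]
    simp only [hD, hE, hM]
    nlinarith [mul_nonneg hμ₁ (sq_nonneg (u₁ t - v₁ t)),
      mul_nonneg hμ₂ (sq_nonneg (u₂ t - v₂ t)),
      mul_nonneg hb.le (sq_nonneg (ρ + σ + v₃ t)),
      mul_nonneg (sub_nonneg.2 hc1) (sq_nonneg (v₁ t)),
      mul_nonneg (sub_nonneg.2 hc2) (sq_nonneg (v₂ t)),
      mul_nonneg (sub_nonneg.2 hc3) (sq_nonneg (v₃ t)),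
      mul_nonneg hμ₁ (sub_nonneg.2 hu1),
      mul_nonneg hμ₂ (sub_nonneg.2 hu2)]
  -- F t = exp (c t) * (E t - M / c)
  set F : ℝ → ℝ := fun t => Real.exp (c * t) * (E t - M / c) with hF
  have hF' : ∀ t ∈ Set.Icc (0 : ℝ) T,
      HasDerivAt F (c * Real.exp (c * t) * (E t - M / c) + Real.exp (c * t) * D t) t := by
    intro t ht
    have hexp : HasDerivAt (fun t => Real.exp (c * t)) (c * Real.exp (c * t)) t := by
      have := ((hasDerivAt_id t).const_mul c).exp
      simpa [mul_comm] using this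
    exact hexp.mul ((hE' t ht).sub_const (M / c))
  have hFmono : AntitoneOn F (Set.Icc (0 : ℝ) T) := by
    apply antitoneOn_of_deriv_nonpos (convex_Icc 0 T)
    · exact fun t ht => (hF' t ht).continuousAt.continuousWithinAt
    · intro t ht
      rw [interior_Icc] at ht
      exact (hF' t (Set.mem_Icc_of_Ioo ht)).differentiableAt.differentiableWithinAt
    · intro t ht
      rw [interior_Icc] at ht
      rw [(hF' t (Set.mem_Icc_of_Ioo ht)).deriv]
      have hk := key t (Set.mem_Icc_of_Ioo ht)
      have hep : 0 < Real.exp (c * t) := Real.exp_pos _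
      have : c * Real.exp (c * t) * (E t - M / c) + Real.exp (c * t) * D t
          = Real.exp (c * t) * (D t + c * E t - M) := by
        field_simp; ring
      rw [this]
      apply mul_nonpos_of_nonneg_of_nonpos hep.le
      linarith
  intro t ht
  have h0 : (0 : ℝ) ∈ Set.Icc (0 : ℝ) T := Set.mem_Icc.2 ⟨le_refl 0, hT⟩
  have hle := hFmono h0 ht ht.1
  simp only [hF, mul_zero, Real.exp_zero, one_mul] at hle
  -- hle : exp (c*t) * (E t - M/c) ≤ E 0 - M/c
  have hep : 0 < Real.exp (c * t) := Real.exp_pos _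
  have hexm : Real.exp (-c * t) = (Real.exp (c * t))⁻¹ := by
    rw [← Real.exp_neg]; ring_nf
  have hEt : E t ≤ Real.exp (-c * t) * E 0 + M / c := by
    rw [hexm]
    have h1 : E t - M / c ≤ (Real.exp (c * t))⁻¹ * (E 0 - M / c) := by
      rw [le_inv_mul_iff₀ hep]
      linarith [hle]
    have h2 : 0 ≤ (Real.exp (c * t))⁻¹ * (M / c) :=
      mul_nonneg (by positivity) (div_nonneg hM_nonneg hc_pos.le)
    have := h1
    nlinarith [this, h2]
  simpa [hE, neg_mul] using hEt
end

section
/- Let ṽ solve the backward-nudged Lorenz system on [0,T] (with the signs of the nudging terms reversed and terminal condition at time T), where ‖u(t)‖ ≤ K. Then ‖ṽ(t)‖² ≤ e^{c̃(T-t)}‖ṽ(T)‖² + (b(ρ+σ)² + (μ̃₁+μ̃₂)K²)/c̃ · e^{c̃T} for all t ∈ [0,T], where c̃ = max{2σ - μ̃₁, 2 - μ̃₂, 3b} (assumed positive). -/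
set_option maxHeartbeats 1000000 in
/-- energy bound for the backward-nudged Lorenz system, solved
backward from the terminal time `T`. -/
theorem lorenz_backward_nudged_energy_bound
    (σ b ρ : ℝ) (hσ : 0 < σ) (hb : 0 < b) (hρ : 0 < ρ)
    (μ₁' μ₂' : ℝ) (hμ₁ : 0 ≤ μ₁') (hμ₂ : 0 ≤ μ₂')
    (T K : ℝ) (hT : 0 ≤ T) (hK : 0 ≤ K)
    (u₁ u₂ u₃ w₁ w₂ w₃ : ℝ → ℝ)
    (hu_cont : Continuous u₁ ∧ Continuous u₂ ∧ Continuous u₃)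
    (hu : ∀ t ∈ Set.Icc (0 : ℝ) T, u₁ t ^ 2 + u₂ t ^ 2 + u₃ t ^ 2 ≤ K ^ 2)
    (hw₁ : ∀ t ∈ Set.Icc (0 : ℝ) T,
      HasDerivAt w₁ (-σ * w₁ t + σ * w₂ t - μ₁' * (u₁ t - w₁ t)) t)
    (hw₂ : ∀ t ∈ Set.Icc (0 : ℝ) T,
      HasDerivAt w₂ (-σ * w₁ t - w₂ t - w₁ t * w₃ t - μ₂' * (u₂ t - w₂ t)) t)
    (hw₃ : ∀ t ∈ Set.Icc (0 : ℝ) T,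
      HasDerivAt w₃ (-b * w₃ t + w₁ t * w₂ t - b * (ρ + σ)) t) :
    ∀ t ∈ Set.Icc (0 : ℝ) T,
      w₁ t ^ 2 + w₂ t ^ 2 + w₃ t ^ 2 ≤
        Real.exp (max (2 * σ - μ₁') (max (2 - μ₂') (3 * b)) * (T - t)) *
            (w₁ T ^ 2 + w₂ T ^ 2 + w₃ T ^ 2)
          + (b * (ρ + σ) ^ 2 + (μ₁' + μ₂') * K ^ 2)
              / max (2 * σ - μ₁') (max (2 - μ₂') (3 * b))
            * Real.exp (max (2 * σ - μ₁') (max (2 - μ₂') (3 * b)) * T) := by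
  set c := max (2 * σ - μ₁') (max (2 - μ₂') (3 * b)) with hc_def
  set D := b * (ρ + σ) ^ 2 + (μ₁' + μ₂') * K ^ 2 with hD_def
  have hc3b : 3 * b ≤ c := le_max_of_le_right (le_max_right _ _)
  have hc1 : 2 * σ - μ₁' ≤ c := le_max_left _ _
  have hc2 : 2 - μ₂' ≤ c := le_max_of_le_right (le_max_left _ _)
  have hc : 0 < c := lt_of_lt_of_le (by linarith) hc3b
  have hD : 0 ≤ D := by positivity
  -- energy and its derivative
  set E : ℝ → ℝ := fun t => w₁ t ^ 2 + w₂ t ^ 2 + w₃ t ^ 2 with hE_def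
  set Ed : ℝ → ℝ := fun t =>
    2 * w₁ t * (-σ * w₁ t + σ * w₂ t - μ₁' * (u₁ t - w₁ t)) +
    2 * w₂ t * (-σ * w₁ t - w₂ t - w₁ t * w₃ t - μ₂' * (u₂ t - w₂ t)) +
    2 * w₃ t * (-b * w₃ t + w₁ t * w₂ t - b * (ρ + σ)) with hEd_def
  have hE' : ∀ t ∈ Set.Icc (0 : ℝ) T, HasDerivAt E (Ed t) t := by
    intro t ht
    have h1 := (hw₁ t ht).pow 2
    have h2 := (hw₂ t ht).pow 2
    have h3 := (hw₃ t ht).pow 2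
    have := (h1.add h2).add h3
    refine this.congr_deriv ?_
    simp only [hEd_def]
    ring
  set G : ℝ → ℝ := fun t => Real.exp (c * t) * (E t + D / c) with hG_def
  have hG' : ∀ t ∈ Set.Icc (0 : ℝ) T,
      HasDerivAt G (Real.exp (c * t) * (c * (E t + D / c) + Ed t)) t := by
    intro t ht
    have hexp : HasDerivAt (fun x => Real.exp (c * x)) (Real.exp (c * t) * (c * 1)) t :=
      ((hasDerivAt_id t).const_mul c).exp
    have := hexp.mul ((hE' t ht).add_const (D / c))
    refine this.congr_deriv ?_
    ring
  have hkey : ∀ t ∈ Set.Icc (0 : ℝ) T, 0 ≤ c * (E t + D / c) + Ed t := by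
    intro t ht
    have hcDc : c * (D / c) = D := by field_simp
    have hu' := hu t ht
    have h1 : 0 ≤ (c - (2 * σ - μ₁')) * w₁ t ^ 2 :=
      mul_nonneg (by linarith) (sq_nonneg _)
    have h2 : 0 ≤ (c - (2 - μ₂')) * w₂ t ^ 2 :=
      mul_nonneg (by linarith) (sq_nonneg _)
    have h3 : 0 ≤ (c - 3 * b) * w₃ t ^ 2 :=
      mul_nonneg (by linarith) (sq_nonneg _)
    have h4 : 0 ≤ μ₁' * (w₁ t - u₁ t) ^ 2 := mul_nonneg hμ₁ (sq_nonneg _)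
    have h5 : 0 ≤ μ₂' * (w₂ t - u₂ t) ^ 2 := mul_nonneg hμ₂ (sq_nonneg _)
    have h6 : 0 ≤ b * (w₃ t - (ρ + σ)) ^ 2 := mul_nonneg hb.le (sq_nonneg _)
    have h7 : 0 ≤ μ₁' * (K ^ 2 - u₁ t ^ 2) :=
      mul_nonneg hμ₁ (by nlinarith [sq_nonneg (u₂ t), sq_nonneg (u₃ t)])
    have h8 : 0 ≤ μ₂' * (K ^ 2 - u₂ t ^ 2) :=
      mul_nonneg hμ₂ (by nlinarith [sq_nonneg (u₁ t), sq_nonneg (u₃ t)])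
    have hsplit : c * (E t + D / c) + Ed t = c * E t + D + Ed t := by
      rw [mul_add, hcDc]
    rw [hsplit]
    have hiden : c * E t + D + Ed t =
        (c - (2 * σ - μ₁')) * w₁ t ^ 2 + (c - (2 - μ₂')) * w₂ t ^ 2 +
        (c - 3 * b) * w₃ t ^ 2 + μ₁' * (w₁ t - u₁ t) ^ 2 + μ₂' * (w₂ t - u₂ t) ^ 2 +
        b * (w₃ t - (ρ + σ)) ^ 2 + μ₁' * (K ^ 2 - u₁ t ^ 2) + μ₂' * (K ^ 2 - u₂ t ^ 2) := by
      simp only [hE_def, hEd_def, hD_def]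
      ring
    rw [hiden]
    linarith
  have hmono : MonotoneOn G (Set.Icc 0 T) := by
    apply monotoneOn_of_deriv_nonneg (convex_Icc 0 T)
    · exact fun t ht => (hG' t ht).continuousAt.continuousWithinAt
    · intro t ht
      rw [interior_Icc] at ht
      exact (hG' t (Set.Ioo_subset_Icc_self ht)).differentiableAt.differentiableWithinAt
    · intro t ht
      rw [interior_Icc] at ht
      rw [(hG' t (Set.Ioo_subset_Icc_self ht)).deriv]
      exact mul_nonneg (Real.exp_pos _).le (hkey t (Set.Ioo_subset_Icc_self ht))
  intro t ht
  have hGle : G t ≤ G T := hmono ht ⟨hT, le_rfl⟩ ht.2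
  simp only [hG_def] at hGle
  have hexpsplit : Real.exp (c * T) = Real.exp (c * t) * Real.exp (c * (T - t)) := by
    rw [← Real.exp_add]; ring_nf
  have hpt := Real.exp_pos (c * t)
  have h2 : E t + D / c ≤ Real.exp (c * (T - t)) * (E T + D / c) := by
    rw [hexpsplit] at hGle
    have := (mul_le_mul_iff_right₀ hpt).mp (by linarith [hGle] :
      Real.exp (c * t) * (E t + D / c) ≤
        Real.exp (c * t) * (Real.exp (c * (T - t)) * (E T + D / c)))
    linarith
  have hDc : 0 ≤ D / c := div_nonneg hD hc.le
  have hexpmono : Real.exp (c * (T - t)) ≤ Real.exp (c * T) :=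
    Real.exp_le_exp.mpr (by nlinarith [ht.1])
  have hfin := mul_le_mul_of_nonneg_left hexpmono hDc
  have goal' : E t ≤ Real.exp (c * (T - t)) * E T + D / c * Real.exp (c * T) := by
    nlinarith [h2, hfin, Real.exp_pos (c * (T - t))]
  simpa only [hE_def] using goal'
end
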